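/- Let D ⊂ ℝ^d (d ≥ 1) be a nonempty open, convex, bounded set, let Ω̂ be a nonempty open subset of D, let (V^k)_{k∈ℕ} be a sequence of maps V^k : closure(D) → ℝ^d, each Lipschitz with constant 1 and satisfying V^k = 0 on ∂D, and let t_k ∈ [0, 1/2] for each k. Define Φ^0 = id on closure(D) and, recursively, Φ^{k+1} = (id + t_k V^k) ∘ Φ^k. Then for every k ∈ ℕ: Φ^k maps closure(D) bijectively onto closure(D), both Φ^k and its inverse are Lipschitz (i.e. Φ^k is bi-Lipschitz), Φ^k(x) = x for all x ∈ ∂D, and the set Ω^k := Φ^k(Ω̂) is an open subset of D. -/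

import Mathlib

open scoped NNReal
open Metric Set

private lemma step_lemma {d : ℕ} (hd : 1 ≤ d) {D : Set (EuclideanSpace ℝ (Fin d))}
    (hDopen : IsOpen D) (hDbdd : Bornology.IsBounded D) (hDne : D.Nonempty)
    {V : EuclideanSpace ℝ (Fin d) → EuclideanSpace ℝ (Fin d)}
    (hVlip : LipschitzOnWith 1 V (closure D))
    (hVbd : ∀ x ∈ frontier D, V x = 0)
    {t : ℝ} (ht0 : 0 ≤ t) (ht2 : t ≤ 1 / 2) :
    (∀ x ∈ closure D, ∀ y ∈ closure D,
        dist (x + t • V x) (y + t • V y) ≤ (3 / 2) * dist x y) ∧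
    (∀ x ∈ closure D, ∀ y ∈ closure D,
        dist x y ≤ 2 * dist (x + t • V x) (y + t • V y)) ∧
    (∀ x ∈ frontier D, x + t • V x = x) ∧
    (∀ x ∈ D, x + t • V x ∈ D) ∧
    (∀ x ∈ closure D, x + t • V x ∈ closure D) ∧
    (Set.SurjOn (fun x => x + t • V x) (closure D) (closure D)) ∧
    (∀ U : Set (EuclideanSpace ℝ (Fin d)), IsOpen U → U ⊆ D →
        IsOpen ((fun x => x + t • V x) '' U)) := by
  haveI : Nonempty (Fin d) := ⟨⟨0, hd⟩⟩
  haveI : Nontrivial (EuclideanSpace ℝ (Fin d)) := by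
    unfold EuclideanSpace PiLp
    infer_instance
  -- basic facts
  have hV : ∀ x ∈ closure D, ∀ y ∈ closure D, dist (V x) (V y) ≤ dist x y := by
    intro x hx y hy
    have := hVlip.dist_le_mul x hx y hy
    simpa using this
  have hne_univ : D ≠ univ := by
    intro h
    exact NormedSpace.unbounded_univ ℝ (EuclideanSpace ℝ (Fin d)) (h ▸ hDbdd)
  have hfr : (frontier D).Nonempty := nonempty_frontier_iff.mpr ⟨hDne, hne_univ⟩
  have hfrcl : frontier D ⊆ closure D := frontier_subset_closure
  have hVnorm : ∀ u ∈ closure D, ‖V u‖ ≤ infDist u (frontier D) := by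
    intro u hu
    by_contra h
    push_neg at h
    obtain ⟨c, hc, hlt⟩ := (infDist_lt_iff hfr).1 h
    have h1 : dist (V u) (V c) ≤ dist u c := hV u hu c (hfrcl hc)
    rw [hVbd c hc, dist_zero_right] at h1
    exact not_le.mpr hlt h1
  have hball : ∀ y ∈ D, ball y (infDist y (frontier D)) ⊆ D := by
    intro y hy
    obtain ⟨w, hw, hwd⟩ := exists_mem_frontier_infDist_compl_eq_dist hy hne_univ
    have h1 : infDist y (frontier D) ≤ infDist y Dᶜ :=
      hwd ▸ infDist_le_dist_of_mem hw
    exact (ball_subset_ball h1).trans ball_infDist_compl_subset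
  have hrpos : ∀ y ∈ D, 0 < infDist y (frontier D) := by
    intro y hy
    refine (isClosed_frontier.notMem_iff_infDist_pos hfr).1 ?_
    rw [hDopen.frontier_eq]
    exact fun h => h.2 hy
  -- Lipschitz bound
  have hlip : ∀ x ∈ closure D, ∀ y ∈ closure D,
      dist (x + t • V x) (y + t • V y) ≤ (3 / 2) * dist x y := by
    intro x hx y hy
    have h1 : dist (x + t • V x) (y + t • V y) ≤ dist x y + t * dist (V x) (V y) := by
      rw [dist_eq_norm, dist_eq_norm, dist_eq_norm]
      calc ‖x + t • V x - (y + t • V y)‖ = ‖(x - y) + t • (V x - V y)‖ := by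
            rw [smul_sub]; abel_nf
        _ ≤ ‖x - y‖ + ‖t • (V x - V y)‖ := norm_add_le _ _
        _ = ‖x - y‖ + t * ‖V x - V y‖ := by
            rw [norm_smul, Real.norm_eq_abs, abs_of_nonneg ht0]
    have h2 : dist (V x) (V y) ≤ dist x y := hV x hx y hy
    nlinarith [dist_nonneg (x := V x) (y := V y), dist_nonneg (x := x) (y := y)]
  -- co-Lipschitz bound
  have hcolip : ∀ x ∈ closure D, ∀ y ∈ closure D,
      dist x y ≤ 2 * dist (x + t • V x) (y + t • V y) := by
    intro x hx y hy
    have h2 : dist (V x) (V y) ≤ dist x y := hV x hx y hy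
    have h1 : dist x y ≤ dist (x + t • V x) (y + t • V y) + t * dist (V x) (V y) := by
      rw [dist_eq_norm, dist_eq_norm, dist_eq_norm]
      calc ‖x - y‖ = ‖(x + t • V x - (y + t • V y)) - t • (V x - V y)‖ := by
            rw [smul_sub]; abel_nf
        _ ≤ ‖x + t • V x - (y + t • V y)‖ + ‖t • (V x - V y)‖ := norm_sub_le _ _
        _ = ‖x + t • V x - (y + t • V y)‖ + t * ‖V x - V y‖ := by
            rw [norm_smul, Real.norm_eq_abs, abs_of_nonneg ht0]
    nlinarith [dist_nonneg (x := V x) (y := V y), dist_nonneg (x := x) (y := y)]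
  have hfrfix : ∀ x ∈ frontier D, x + t • V x = x := by
    intro x hx
    rw [hVbd x hx, smul_zero, add_zero]
  have hsmul_le : ∀ u ∈ closure D, ‖t • V u‖ ≤ (1 / 2) * infDist u (frontier D) := by
    intro u hu
    rw [norm_smul, Real.norm_eq_abs, abs_of_nonneg ht0]
    have h1 := hVnorm u hu
    have h2 : (0:ℝ) ≤ infDist u (frontier D) := infDist_nonneg
    nlinarith [norm_nonneg (V u)]
  have hmapsD : ∀ x ∈ D, x + t • V x ∈ D := by
    intro x hx
    apply hball x hx
    rw [mem_ball, dist_eq_norm]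
    have h1 : ‖x + t • V x - x‖ = ‖t • V x‖ := by rw [add_sub_cancel_left]
    rw [h1]
    have := hsmul_le x (subset_closure hx)
    have := hrpos x hx
    linarith
  have hmapscl : ∀ x ∈ closure D, x + t • V x ∈ closure D := by
    intro x hx
    by_cases hxD : x ∈ D
    · exact subset_closure (hmapsD x hxD)
    · have hxfr : x ∈ frontier D := by
        rw [hDopen.frontier_eq]; exact ⟨hx, hxD⟩
      rw [hfrfix x hxfr]; exact hx
  -- surjectivity
  have hsurj : Set.SurjOn (fun x => x + t • V x) (closure D) (closure D) := by
    intro y hy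
    by_cases hyD : y ∈ D
    · set r := infDist y (frontier D) with hr_def
      have hr : 0 < r := hrpos y hyD
      have hssub : closedBall y r ⊆ closure D := by
        rw [← closure_ball y hr.ne']
        exact closure_mono (hball y hyD)
      set T : EuclideanSpace ℝ (Fin d) → EuclideanSpace ℝ (Fin d) :=
        fun u => y - t • V u with hT_def
      have hTmaps : MapsTo T (closedBall y r) (closedBall y r) := by
        intro u hu
        rw [mem_closedBall, dist_eq_norm]
        have h1 : ‖T u - y‖ = ‖t • V u‖ := by
          rw [hT_def]; simp [norm_sub_rev]
        rw [h1]
        have h2 := hsmul_le u (hssub hu)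
        have h3 : infDist u (frontier D) ≤ infDist y (frontier D) + dist u y :=
          infDist_le_infDist_add_dist
        have h4 : dist u y ≤ r := mem_closedBall.1 hu
        nlinarith [norm_nonneg (t • V u)]
      have hsc : IsComplete (closedBall y r) := Metric.isClosed_closedBall.isComplete
      have hcontr : ContractingWith (1/2 : ℝ≥0) (hTmaps.restrict T _ _) := by
        constructor
        · rw [← NNReal.coe_lt_coe]
          push_cast
          norm_num
        · apply LipschitzWith.of_dist_le_mul
          rintro ⟨u, hu⟩ ⟨v, hv⟩
          rw [Subtype.dist_eq, Subtype.dist_eq]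
          show dist (T u) (T v) ≤ _
          have h1 : dist (T u) (T v) = t * dist (V u) (V v) := by
            rw [hT_def, dist_eq_norm, dist_eq_norm]
            simp only []
            rw [sub_sub_sub_cancel_left, ← smul_sub, norm_smul, Real.norm_eq_abs,
              abs_of_nonneg ht0, norm_sub_rev]
          have h2 : dist (V u) (V v) ≤ dist u v := hV u (hssub hu) v (hssub hv)
          have h3 : ((1/2 : ℝ≥0) : ℝ) = 1/2 := by norm_num
          rw [h1, h3]
          nlinarith [dist_nonneg (x := u) (y := v)]
      have hx_mem := ContractingWith.efixedPoint_mem' hsc hTmaps hcontr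
        (mem_closedBall_self hr.le) (x := y) (hx := edist_ne_top _ _)
      have hx_fix := ContractingWith.efixedPoint_isFixedPt' hsc hTmaps hcontr
        (mem_closedBall_self hr.le) (x := y) (hx := edist_ne_top _ _)
      refine ⟨_, hssub hx_mem, ?_⟩
      have h5 := hx_fix
      unfold Function.IsFixedPt at h5
      simp only [hT_def] at h5
      show _ + t • V _ = y
      exact (sub_eq_iff_eq_add.mp h5).symm
    · have hyfr : y ∈ frontier D := by
        rw [hDopen.frontier_eq]; exact ⟨hy, hyD⟩
      exact ⟨y, hy, hfrfix y hyfr⟩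
  refine ⟨hlip, hcolip, hfrfix, hmapsD, hmapscl, hsurj, ?_⟩
  -- open images
  intro U hU hUD
  rw [Metric.isOpen_iff]
  rintro z ⟨x, hxU, rfl⟩
  obtain ⟨ρ, hρ, hρsub⟩ := Metric.isOpen_iff.1 hU x hxU
  have hxD := hUD hxU
  have hxcl : x ∈ closure D := subset_closure hxD
  have hzD : x + t • V x ∈ D := hmapsD x hxD
  refine ⟨min (infDist (x + t • V x) (frontier D)) (ρ / 2),
    lt_min (hrpos _ hzD) (by linarith), ?_⟩
  intro w hw
  rw [mem_ball] at hw
  have hwD : w ∈ D := by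
    apply hball _ hzD
    rw [mem_ball]
    exact hw.trans_le (min_le_left _ _)
  obtain ⟨u, hu, hu'⟩ := hsurj (subset_closure hwD)
  refine ⟨u, hρsub ?_, hu'⟩
  rw [mem_ball]
  have h1 : dist u x ≤ 2 * dist (u + t • V u) (x + t • V x) := hcolip u hu x hxcl
  have h2 : dist (u + t • V u) (x + t • V x) = dist w (x + t • V x) := by
    simp only at hu'
    rw [hu']
  have h3 : dist w (x + t • V x) < ρ / 2 := hw.trans_le (min_le_right _ _)
  linarith

/-- Properties of the mappings `Φ^k` produced by the steepest
descent algorithm (Lemma 2.2 of the paper): each `Φ^k` maps `closure D`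
bijectively onto itself, is bi-Lipschitz there, fixes the boundary of `D`,
and `Ω^k := Φ^k(Ω̂)` is an open subset of `D`. -/
theorem stmt0 (d : ℕ) (hd : 1 ≤ d)
    (D Ωhat : Set (EuclideanSpace ℝ (Fin d)))
    (hDopen : IsOpen D) (hDconv : Convex ℝ D) (hDbdd : Bornology.IsBounded D)
    (hDne : D.Nonempty)
    (hΩopen : IsOpen Ωhat) (hΩne : Ωhat.Nonempty) (hΩD : Ωhat ⊆ D)
    (V : ℕ → EuclideanSpace ℝ (Fin d) → EuclideanSpace ℝ (Fin d))
    (hVlip : ∀ k, LipschitzOnWith 1 (V k) (closure D))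
    (hVbd : ∀ k, ∀ x ∈ frontier D, V k x = 0)
    (t : ℕ → ℝ) (ht : ∀ k, t k ∈ Set.Icc (0 : ℝ) (1 / 2))
    (Φ : ℕ → EuclideanSpace ℝ (Fin d) → EuclideanSpace ℝ (Fin d))
    (hΦ0 : ∀ x ∈ closure D, Φ 0 x = x)
    (hΦsucc : ∀ k, ∀ x ∈ closure D, Φ (k + 1) x = Φ k x + t k • V k (Φ k x)) :
    ∀ k : ℕ,
      Set.BijOn (Φ k) (closure D) (closure D) ∧
      (∃ K : ℝ≥0, LipschitzOnWith K (Φ k) (closure D)) ∧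
      (∃ K : ℝ≥0, ∀ x ∈ closure D, ∀ y ∈ closure D,
        dist x y ≤ (K : ℝ) * dist (Φ k x) (Φ k y)) ∧
      (∀ x ∈ frontier D, Φ k x = x) ∧
      IsOpen (Φ k '' Ωhat) ∧ Φ k '' Ωhat ⊆ D := by
  have hΩcl : Ωhat ⊆ closure D := hΩD.trans subset_closure
  have main : ∀ k : ℕ,
      Set.BijOn (Φ k) (closure D) (closure D) ∧
      (∀ x ∈ closure D, ∀ y ∈ closure D,
        dist (Φ k x) (Φ k y) ≤ (3 / 2 : ℝ) ^ k * dist x y) ∧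
      (∀ x ∈ closure D, ∀ y ∈ closure D,
        dist x y ≤ (2 : ℝ) ^ k * dist (Φ k x) (Φ k y)) ∧
      (∀ x ∈ frontier D, Φ k x = x) ∧
      IsOpen (Φ k '' Ωhat) ∧ Φ k '' Ωhat ⊆ D := by
    intro k
    induction k with
    | zero =>
      have himg : Φ 0 '' Ωhat = Ωhat := by
        rw [Set.image_congr (fun x hx => hΦ0 x (hΩcl hx))]; exact Set.image_id Ωhat
      refine ⟨⟨?_, ?_, ?_⟩, ?_, ?_, ?_, ?_, ?_⟩
      · intro x hx; rw [hΦ0 x hx]; exact hx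
      · intro x hx y hy h; rwa [hΦ0 x hx, hΦ0 y hy] at h
      · intro y hy; exact ⟨y, hy, hΦ0 y hy⟩
      · intro x hx y hy; rw [hΦ0 x hx, hΦ0 y hy, pow_zero, one_mul]
      · intro x hx y hy; rw [hΦ0 x hx, hΦ0 y hy, pow_zero, one_mul]
      · intro x hx; exact hΦ0 x (frontier_subset_closure hx)
      · rw [himg]; exact hΩopen
      · rw [himg]; exact hΩD
    | succ k ih =>
      obtain ⟨ihbij, ihlip, ihcolip, ihfr, ihopen, ihsub⟩ := ih
      obtain ⟨hlip, hcolip, hfrfix, hmapsD, hmapscl, hsurj, hopen⟩ :=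
        step_lemma hd hDopen hDbdd hDne (hVlip k) (hVbd k) (ht k).1 (ht k).2
      have hrw : ∀ x ∈ closure D, Φ (k + 1) x = Φ k x + t k • V k (Φ k x) := hΦsucc k
      have hmem : ∀ x ∈ closure D, Φ k x ∈ closure D := ihbij.mapsTo
      have hlip' : ∀ x ∈ closure D, ∀ y ∈ closure D,
          dist (Φ (k + 1) x) (Φ (k + 1) y) ≤ (3 / 2 : ℝ) ^ (k + 1) * dist x y := by
        intro x hx y hy
        rw [hrw x hx, hrw y hy]
        calc dist (Φ k x + t k • V k (Φ k x)) (Φ k y + t k • V k (Φ k y))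
            ≤ (3 / 2) * dist (Φ k x) (Φ k y) := hlip _ (hmem x hx) _ (hmem y hy)
          _ ≤ (3 / 2) * ((3 / 2) ^ k * dist x y) := by
              have := ihlip x hx y hy
              nlinarith
          _ = (3 / 2 : ℝ) ^ (k + 1) * dist x y := by ring
      have hcolip' : ∀ x ∈ closure D, ∀ y ∈ closure D,
          dist x y ≤ (2 : ℝ) ^ (k + 1) * dist (Φ (k + 1) x) (Φ (k + 1) y) := by
        intro x hx y hy
        rw [hrw x hx, hrw y hy]
        have h1 := ihcolip x hx y hy
        have h2 := hcolip _ (hmem x hx) _ (hmem y hy)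
        have h3 : (0:ℝ) < 2 ^ k := by positivity
        calc dist x y ≤ (2:ℝ) ^ k * dist (Φ k x) (Φ k y) := h1
          _ ≤ (2:ℝ) ^ k * (2 * dist (Φ k x + t k • V k (Φ k x)) (Φ k y + t k • V k (Φ k y))) := by
              nlinarith
          _ = (2:ℝ) ^ (k + 1) * dist (Φ k x + t k • V k (Φ k x)) (Φ k y + t k • V k (Φ k y)) := by
              ring
      have hmaps' : Set.MapsTo (Φ (k + 1)) (closure D) (closure D) := by
        intro x hx
        rw [hrw x hx]
        exact hmapscl _ (hmem x hx)
      have hinj' : Set.InjOn (Φ (k + 1)) (closure D) := by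
        intro x hx y hy h
        have := hcolip' x hx y hy
        rw [h, dist_self, mul_zero] at this
        exact dist_le_zero.mp this
      have hsurj' : Set.SurjOn (Φ (k + 1)) (closure D) (closure D) := by
        intro y hy
        obtain ⟨u, hu, hu'⟩ := hsurj hy
        obtain ⟨x, hx, hx'⟩ := ihbij.surjOn hu
        refine ⟨x, hx, ?_⟩
        rw [hrw x hx, hx']
        exact hu'
      have himg : Φ (k + 1) '' Ωhat = (fun u => u + t k • V k u) '' (Φ k '' Ωhat) := by
        rw [← Set.image_comp]
        exact Set.image_congr fun x hx => by
          simp only [Function.comp_apply]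
          exact hrw x (hΩcl hx)
      have hsub' : Φ (k + 1) '' Ωhat ⊆ D := by
        rw [himg]
        rintro w ⟨u, hu, rfl⟩
        exact hmapsD u (ihsub hu)
      have hopen' : IsOpen (Φ (k + 1) '' Ωhat) := by
        rw [himg]
        exact hopen _ ihopen ihsub
      exact ⟨⟨hmaps', hinj', hsurj'⟩, hlip', hcolip', fun x hx => by
        rw [hrw x (frontier_subset_closure hx), ihfr x hx, hfrfix x hx], hopen', hsub'⟩
  intro k
  obtain ⟨hbij, hlip, hcolip, hfr, hopen, hsub⟩ := main k
  refine ⟨hbij, ⟨(3/2 : ℝ≥0) ^ k, ?_⟩, ⟨(2 : ℝ≥0) ^ k, ?_⟩, hfr, hopen, hsub⟩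
  · rw [lipschitzOnWith_iff_dist_le_mul]
    intro x hx y hy
    have := hlip x hx y hy
    have hc : (((3/2 : ℝ≥0) ^ k : ℝ≥0) : ℝ) = (3/2 : ℝ) ^ k := by push_cast; norm_num
    rw [hc]
    exact this
  · intro x hx y hy
    have := hcolip x hx y hy
    have hc : (((2 : ℝ≥0) ^ k : ℝ≥0) : ℝ) = (2 : ℝ) ^ k := by push_cast; ring
    rw [hc]
    exact this
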